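/- Let ρ be a d×d density matrix (positive semidefinite, trace 1) and b₁,…,b_d nonnegative integers. Then Split_{b₁,…,b_d}(ρ) is also a density matrix: positive semidefinite with trace 1. -/

import Mathlib

open Matrix BigOperators
open scoped ComplexOrder

/-- The index set of `Split`: pairs `(j, s)` with `j ∈ [d]` and `s ∈ {0,1}^{b j}`. -/
abbrev SIdx (d : ℕ) (b : Fin d → ℕ) := Σ j : Fin d, Fin (b j) → Bool

/-- `s` is a prefix of `t` (as bit strings). -/
def BitPrefix {a c : ℕ} (s : Fin a → Bool) (t : Fin c → Bool) : Prop :=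
  ∃ h : a ≤ c, ∀ i : Fin a, t (Fin.castLE h i) = s i

open scoped Classical in
/-- The splitting map `Split_{b₁,…,b_d}`: the entry at `((j₁,s₁),(j₂,s₂))` is
`M_{j₁ j₂} / 2^{max(b_{j₁}, b_{j₂})}` if one of `s₁, s₂` is a prefix of the other,
and `0` otherwise. -/
noncomputable def Split {d : ℕ} (b : Fin d → ℕ) (M : Matrix (Fin d) (Fin d) ℂ) :
    Matrix (SIdx d b) (SIdx d b) ℂ := fun p q =>
  if BitPrefix p.2 q.2 ∨ BitPrefix q.2 p.2 then
    M p.1 q.1 / 2 ^ max (b p.1) (b q.1) else 0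

open scoped Classical in
/-- The dual splitting map `DSplit_{b₁,…,b_d}`: the entry at `((j₁,s₁),(j₂,s₂))` is
`N_{j₁ j₂}` if one of `s₁, s₂` is a prefix of the other, and `0` otherwise. -/
noncomputable def DSplit {d : ℕ} (b : Fin d → ℕ) (N : Matrix (Fin d) (Fin d) ℂ) :
    Matrix (SIdx d b) (SIdx d b) ℂ := fun p q =>
  if BitPrefix p.2 q.2 ∨ BitPrefix q.2 p.2 then N p.1 q.1 else 0

/-- Frobenius norm of a matrix. -/
noncomputable def frobNorm {n m : Type*} [Fintype n] [Fintype m] (A : Matrix n m ℂ) : ℝ :=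
  Real.sqrt (∑ i, ∑ j, ‖A i j‖ ^ 2)

/-- Operator (spectral) norm of a matrix. -/
noncomputable def opNorm {n : Type*} [Fintype n] [DecidableEq n] (A : Matrix n n ℂ) : ℝ :=
  ‖(Matrix.toEuclideanCLM (𝕜 := ℂ) A : EuclideanSpace ℂ n →L[ℂ] EuclideanSpace ℂ n)‖

lemma bitPrefix_refl {a : ℕ} (s : Fin a → Bool) : BitPrefix s s :=
  ⟨le_rfl, fun i => rfl⟩

lemma bitPrefix_trans {a c e : ℕ} {s : Fin a → Bool} {t : Fin c → Bool} {u : Fin e → Bool}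
    (h1 : BitPrefix s t) (h2 : BitPrefix t u) : BitPrefix s u := by
  obtain ⟨h1, H1⟩ := h1; obtain ⟨h2, H2⟩ := h2
  exact ⟨h1.trans h2, fun i => by rw [show Fin.castLE (h1.trans h2) i = Fin.castLE h2 (Fin.castLE h1 i) by rfl, H2, H1]⟩

lemma bitPrefix_of_le {a c e : ℕ} {s : Fin a → Bool} {t : Fin c → Bool} {u : Fin e → Bool}
    (hac : a ≤ c) (h1 : BitPrefix s u) (h2 : BitPrefix t u) : BitPrefix s t := by
  obtain ⟨h1', H1⟩ := h1; obtain ⟨h2', H2⟩ := h2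
  refine ⟨hac, fun i => ?_⟩
  rw [← H1 i, ← H2 (Fin.castLE hac i)]
  rfl

open scoped Classical in
lemma card_prefix {B c : ℕ} (hc : c ≤ B) (t : Fin c → Bool) :
    Fintype.card {u : Fin B → Bool // BitPrefix t u} = 2 ^ (B - c) := by
  have e : {u : Fin B → Bool // BitPrefix t u} ≃ (Fin (B - c) → Bool) := {
    toFun := fun u i => u.1 ⟨c + i, by omega⟩
    invFun := fun v => ⟨fun i => if h : (i : ℕ) < c then t ⟨i, h⟩ else v ⟨(i : ℕ) - c, by omega⟩,
      ⟨hc, fun i => by simp [Fin.castLE, i.isLt]⟩⟩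
    left_inv := fun u => by
      ext i
      show (if h : (i : ℕ) < c then t ⟨i, h⟩ else u.1 ⟨c + ((i:ℕ) - c), by omega⟩) = u.1 i
      by_cases h : (i : ℕ) < c
      · rw [dif_pos h]
        have := u.2.2 ⟨i, h⟩
        simpa [Fin.castLE] using this.symm
      · rw [dif_neg h]
        have hi : (⟨c + (((i : ℕ)) - c), by omega⟩ : Fin B) = i :=
          Fin.ext (show c + ((i : ℕ) - c) = (i : ℕ) by omega)
        rw [hi]
    right_inv := fun v => by
      ext i
      show (if h : (c + (i:ℕ)) < c then t ⟨c + (i:ℕ), h⟩ else v ⟨(c + (i:ℕ)) - c, by omega⟩) = v i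
      rw [dif_neg (by omega)]
      have hi : (⟨(c + (i : ℕ)) - c, by omega⟩ : Fin (B - c)) = i :=
        Fin.ext (show (c + (i : ℕ)) - c = (i : ℕ) by omega)
      rw [hi] }
  rw [Fintype.card_congr e]
  simp

open scoped Classical in
lemma sum_indicator_aux {B a c : ℕ} (hc : c ≤ B) (s : Fin a → Bool) (t : Fin c → Bool)
    (hst : BitPrefix s t) :
    (∑ u : Fin B → Bool, (if BitPrefix s u then (1:ℂ) else 0) * (if BitPrefix t u then 1 else 0))
    = 2 ^ (B - c) := by
  have h1 : ∀ u : Fin B → Bool,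
      (if BitPrefix s u then (1:ℂ) else 0) * (if BitPrefix t u then 1 else 0)
      = if BitPrefix t u then 1 else 0 := by
    intro u
    by_cases h : BitPrefix t u
    · rw [if_pos h, if_pos (bitPrefix_trans hst h), one_mul]
    · rw [if_neg h, mul_zero]
  rw [Finset.sum_congr rfl (fun u _ => h1 u), Finset.sum_boole]
  rw [← Fintype.card_subtype, card_prefix hc t]
  norm_num

open scoped Classical in
lemma sum_indicator {B a c : ℕ} (ha : a ≤ B) (hc : c ≤ B) (s : Fin a → Bool) (t : Fin c → Bool) :
    (∑ u : Fin B → Bool, (if BitPrefix s u then (1:ℂ) else 0) * (if BitPrefix t u then 1 else 0))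
    = if BitPrefix s t ∨ BitPrefix t s then (2:ℂ) ^ B / 2 ^ (max a c) else 0 := by
  have hpow : ∀ {n m : ℕ}, n ≤ m → (2:ℂ) ^ (m - n) = 2 ^ m / 2 ^ n := fun h => by
    rw [pow_sub₀ _ two_ne_zero h, div_eq_mul_inv]
  by_cases hst : BitPrefix s t
  · rw [if_pos (Or.inl hst), sum_indicator_aux hc s t hst,
      Nat.max_eq_right hst.1, hpow hc]
  by_cases hts : BitPrefix t s
  · rw [if_pos (Or.inr hts), Nat.max_eq_left hts.1, ← hpow ha]
    rw [← sum_indicator_aux ha t s hts]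
    exact Finset.sum_congr rfl (fun u _ => mul_comm _ _)
  · rw [if_neg (by tauto)]
    refine Finset.sum_eq_zero (fun u _ => ?_)
    by_cases h1 : BitPrefix s u
    · by_cases h2 : BitPrefix t u
      · exfalso
        rcases le_total a c with h | h
        · exact hst (bitPrefix_of_le h h1 h2)
        · exact hts (bitPrefix_of_le h h2 h1)
      · rw [if_neg h2, mul_zero]
    · rw [if_neg h1, zero_mul]

open scoped Classical in
noncomputable def Amat {d : ℕ} (b : Fin d → ℕ) {B : ℕ} (u : Fin B → Bool) :
    Matrix (Σ j : Fin d, Fin (b j) → Bool) (Fin d) ℂ := fun p j =>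
  (if p.1 = j then 1 else 0) * (if BitPrefix p.2 u then 1 else 0)

open scoped Classical in
lemma amat_entry {d : ℕ} (b : Fin d → ℕ) {B : ℕ} (u : Fin B → Bool)
    (ρ : Matrix (Fin d) (Fin d) ℂ) (p q : Σ j : Fin d, Fin (b j) → Bool) :
    (Amat b u * ρ * (Amat b u)ᴴ) p q
    = (if BitPrefix p.2 u then (1:ℂ) else 0) * (if BitPrefix q.2 u then (1:ℂ) else 0)
      * ρ p.1 q.1 := by
  classical
  simp only [Matrix.mul_apply, Matrix.conjTranspose_apply, Amat, star_mul', apply_ite star,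
    star_one, star_zero, ite_mul, mul_ite, one_mul, mul_one, zero_mul, mul_zero,
    Finset.sum_ite_eq, Finset.mem_univ, if_true]
  split_ifs <;> simp [Finset.sum_ite_eq]

open scoped Classical in
lemma split_eq {d : ℕ} (b : Fin d → ℕ) (ρ : Matrix (Fin d) (Fin d) ℂ) :
    Split b ρ = (((2:ℝ) ^ Finset.univ.sup b)⁻¹) •
      ∑ u : Fin (Finset.univ.sup b) → Bool, Amat b u * ρ * (Amat b u)ᴴ := by
  set B := Finset.univ.sup b with hB
  have hb : ∀ j, b j ≤ B := fun j => Finset.le_sup (Finset.mem_univ j)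
  ext p q
  simp only [Matrix.smul_apply, Matrix.sum_apply, amat_entry]
  rw [show (∑ u : Fin B → Bool,
      (if BitPrefix p.2 u then (1:ℂ) else 0) * (if BitPrefix q.2 u then 1 else 0) * ρ p.1 q.1)
    = (∑ u : Fin B → Bool,
      (if BitPrefix p.2 u then (1:ℂ) else 0) * (if BitPrefix q.2 u then 1 else 0)) * ρ p.1 q.1
    from (Finset.sum_mul _ _ _).symm]
  rw [sum_indicator (hb p.1) (hb q.1)]
  unfold Split
  split_ifs with h
  · rw [Complex.real_smul]
    push_cast
    have h1 : ((2:ℂ) ^ B) ≠ 0 := by positivity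
    have h2 : ((2:ℂ) ^ max (b p.1) (b q.1)) ≠ 0 := by positivity
    field_simp
  · simp

lemma posSemidef_sum {ι n : Type*} [Fintype n] (s : Finset ι) (f : ι → Matrix n n ℂ)
    (h : ∀ i ∈ s, (f i).PosSemidef) : (∑ i ∈ s, f i).PosSemidef :=
  Finset.sum_induction f _ (fun _ _ ha hb => ha.add hb) Matrix.PosSemidef.zero h

lemma posSemidef_real_smul {n : Type*} [Fintype n] {M : Matrix n n ℂ} (hM : M.PosSemidef)
    {c : ℝ} (hc : 0 ≤ c) : (c • M).PosSemidef := by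
  rw [Matrix.posSemidef_iff_dotProduct_mulVec]
  constructor
  · ext i j
    simp only [Matrix.conjTranspose_apply, Matrix.smul_apply, Complex.real_smul, star_mul',
      Complex.conj_ofReal]
    rw [← Matrix.conjTranspose_apply, hM.1, Complex.star_def, Complex.conj_ofReal]
  · intro x
    have h0 : (0:ℂ) ≤ (c:ℂ) := by exact_mod_cast Complex.zero_le_real.mpr hc
    calc (0:ℂ) ≤ (c:ℂ) * (dotProduct (star x) (M *ᵥ x)) := mul_nonneg h0 (hM.dotProduct_mulVec_nonneg x)
    _ = dotProduct (star x) ((c • M) *ᵥ x) := by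
        rw [← Complex.coe_smul, Matrix.smul_mulVec, dotProduct_smul, smul_eq_mul]

/-- If `ρ` is a density matrix (PSD, trace 1), then so is `Split_b(ρ)`. -/
theorem split_densityMatrix {d : ℕ} (b : Fin d → ℕ) (ρ : Matrix (Fin d) (Fin d) ℂ)
    (hρ : ρ.PosSemidef) (htr : ρ.trace = 1) :
    (Split b ρ).PosSemidef ∧ (Split b ρ).trace = 1 := by
  constructor
  · rw [split_eq]
    exact posSemidef_real_smul
      (posSemidef_sum _ _ (fun u _ => hρ.mul_mul_conjTranspose_same (Amat b u)))
      (by positivity)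
  · have hdiag : ∀ (p : SIdx d b), Split b ρ p p = ρ p.1 p.1 / 2 ^ (b p.1) := by
      intro p
      unfold Split
      rw [if_pos (Or.inl (bitPrefix_refl p.2)), max_self]
    rw [Matrix.trace]
    have : ∀ p : SIdx d b, (Split b ρ).diag p = ρ p.1 p.1 / 2 ^ (b p.1) := fun p => hdiag p
    simp only [Matrix.diag, hdiag]
    rw [← Finset.univ_sigma_univ, Finset.sum_sigma]
    have hsum : ∀ j : Fin d,
        (∑ _s : Fin (b j) → Bool, ρ j j / 2 ^ (b j)) = ρ j j := by
      intro j
      rw [Finset.sum_const, Finset.card_univ]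
      have hcard : Fintype.card (Fin (b j) → Bool) = 2 ^ (b j) := by simp
      rw [hcard, nsmul_eq_mul]
      push_cast
      field_simp
    rw [Finset.sum_congr rfl (fun j _ => hsum j)]
    simpa [Matrix.trace, Matrix.diag] using htr
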